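/- Let n ≥ 1, Z ∈ ℂ^{n×n}, and for each subset K of {1,…,n} with |K| = k define f(Z,K) = (1/C(n,k)) Σ_{J ⊆ {1,…,n}, |J|=k} |per(Z[J,K])/k!|². Then for any subset K of {1,…,n} and any ordered weak partition (W₁,…,W_d) of K, f(Z,K) ≤ Π_{r=1}^d f(Z,W_r). -/

import Mathlib

set_option linter.unusedVariables false
set_option linter.unusedTactic false
set_option linter.unusedSectionVars false

open Finset

/-- The permanent of the submatrix of `Z` with rows in `J` and columns in `K`,
defined as a sum over bijections from `J` to `K` (it is `1` when `J = K = ∅`). -/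
noncomputable def perSub {n : ℕ} (Z : Matrix (Fin n) (Fin n) ℂ) (J K : Finset (Fin n)) : ℂ :=
  ∑ f ∈ Finset.univ.filter (fun f : {x // x ∈ J} → {x // x ∈ K} => Function.Bijective f),
    ∏ j : {x // x ∈ J}, Z j.1 (f j).1

/-- `f(Z,K) = (1/C(n,k)) ∑_{|J|=k} |per(Z[J,K])/k!|²` where `k = |K|`. -/
noncomputable def fZ {n : ℕ} (Z : Matrix (Fin n) (Fin n) ℂ) (K : Finset (Fin n)) : ℝ :=
  (1 / (n.choose K.card) : ℝ) *
    ∑ J ∈ Finset.powersetCard K.card (Finset.univ : Finset (Fin n)),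
      ‖perSub Z J K / (K.card.factorial : ℂ)‖ ^ 2


noncomputable def Lam (n k1 k2 : ℕ) : ℝ :=
  ((n.choose (k1+k2) : ℝ) * ((k1+k2).choose k1 : ℝ)^2) / ((n.choose k1 : ℝ) * (n.choose k2 : ℝ))

lemma Lam_nonneg (n k1 k2 : ℕ) : 0 ≤ Lam n k1 k2 := by unfold Lam; positivity

lemma Lam_zero (n k1 k2 : ℕ) (h : n < k1 + k2) : Lam n k1 k2 = 0 := by
  unfold Lam; rw [Nat.choose_eq_zero_of_lt h]; simp

lemma lam_fact (k1 k2 m : ℕ) :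
    Lam (k1+k2+m) k1 k2 = ((k1+k2).factorial * ((k2+m).factorial * (k1+m).factorial) : ℝ)
      / (k1.factorial * (k2.factorial * (m.factorial * (k1+k2+m).factorial))) := by
  unfold Lam
  rw [Nat.cast_choose ℝ (show k1+k2 ≤ k1+k2+m by omega),
      Nat.cast_choose ℝ (show k1 ≤ k1+k2 by omega),
      Nat.cast_choose ℝ (show k1 ≤ k1+k2+m by omega),
      Nat.cast_choose ℝ (show k2 ≤ k1+k2+m by omega),
      show k1+k2+m-(k1+k2) = m by omega, show k1+k2-k1 = k2 by omega,
      show k1+k2+m-k1 = k2+m by omega, show k1+k2+m-k2 = k1+m by omega]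
  have h1 : ((k1+k2+m).factorial : ℝ) ≠ 0 := by positivity
  have h2 : ((k1+k2).factorial : ℝ) ≠ 0 := by positivity
  have h3 : (k1.factorial : ℝ) ≠ 0 := by positivity
  have h4 : (k2.factorial : ℝ) ≠ 0 := by positivity
  have h5 : (m.factorial : ℝ) ≠ 0 := by positivity
  have h6 : ((k1+m).factorial : ℝ) ≠ 0 := by positivity
  have h7 : ((k2+m).factorial : ℝ) ≠ 0 := by positivity
  field_simp

private lemma fact_step' (x y : ℕ) (h : x = y + 1) :
    ((x).factorial : ℝ) = (y+1 : ℕ) * ((y).factorial : ℝ) := by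
  subst h; rw [Nat.factorial_succ]; push_cast; ring

lemma idI1 (A B m : ℕ) :
    ((A:ℝ)+B+2) * ((A:ℝ)+m+1) * Lam (A+B+m+1) A (B+1)
      = ((A:ℝ)+1) * ((A:ℝ)+B+m+2) * Lam (A+B+m+2) (A+1) (B+1) := by
  have e1 : Lam (A+B+m+1) A (B+1) = Lam (A+(B+1)+m) A (B+1) := by congr 1; omega
  have e2 : Lam (A+B+m+2) (A+1) (B+1) = Lam ((A+1)+(B+1)+m) (A+1) (B+1) := by congr 1; omega
  rw [e1, e2, lam_fact, lam_fact]
  simp only [show A+(B+1) = A+B+1 from by omega, show (A+1)+(B+1) = A+B+2 from by omega,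
    show A+(B+1)+m = A+B+m+1 from by omega, show (A+1)+(B+1)+m = A+B+m+2 from by omega,
    show (B+1)+m = B+m+1 from by omega, show (A+1)+m = A+m+1 from by omega,
    show A+B+1+m = A+B+m+1 from by omega, show A+B+2+m = A+B+m+2 from by omega,
    show A+B+1+1 = A+B+2 from by omega]
  rw [fact_step' (A+B+2) (A+B+1) (by omega), fact_step' (A+m+1) (A+m) (by omega),
      fact_step' (A+1) A (by omega), fact_step' (A+B+m+2) (A+B+m+1) (by omega)]
  have h1 : ((A+B+m+1).factorial : ℝ) ≠ 0 := by positivity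
  have h2 : ((A+B+1).factorial : ℝ) ≠ 0 := by positivity
  have h3 : (Nat.factorial A : ℝ) ≠ 0 := by positivity
  have h4 : ((B+1).factorial : ℝ) ≠ 0 := by positivity
  have h5 : (Nat.factorial m : ℝ) ≠ 0 := by positivity
  have h6 : ((A+m).factorial : ℝ) ≠ 0 := by positivity
  have h7 : ((B+m+1).factorial : ℝ) ≠ 0 := by positivity
  field_simp
  push_cast
  ring

lemma idI2 (A B m : ℕ) :
    ((A:ℝ)+B+2) * ((B:ℝ)+m+1) * Lam (A+B+m+1) (A+1) B
      = ((B:ℝ)+1) * ((A:ℝ)+B+m+2) * Lam (A+B+m+2) (A+1) (B+1) := by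
  have e1 : Lam (A+B+m+1) (A+1) B = Lam ((A+1)+B+m) (A+1) B := by congr 1; omega
  have e2 : Lam (A+B+m+2) (A+1) (B+1) = Lam ((A+1)+(B+1)+m) (A+1) (B+1) := by congr 1; omega
  rw [e1, e2, lam_fact, lam_fact]
  simp only [show (A+1)+B = A+B+1 from by omega, show (A+1)+(B+1) = A+B+2 from by omega,
    show (A+1)+B+m = A+B+m+1 from by omega, show (A+1)+(B+1)+m = A+B+m+2 from by omega,
    show (B+1)+m = B+m+1 from by omega, show (A+1)+m = A+m+1 from by omega,
    show A+B+1+m = A+B+m+1 from by omega, show A+B+2+m = A+B+m+2 from by omega,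
    show A+B+1+1 = A+B+2 from by omega]
  rw [fact_step' (A+B+2) (A+B+1) (by omega), fact_step' (B+m+1) (B+m) (by omega),
      fact_step' (B+1) B (by omega), fact_step' (A+B+m+2) (A+B+m+1) (by omega)]
  have h1 : ((A+B+m+1).factorial : ℝ) ≠ 0 := by positivity
  have h2 : ((A+B+1).factorial : ℝ) ≠ 0 := by positivity
  have h3 : ((A+1).factorial : ℝ) ≠ 0 := by positivity
  have h4 : (Nat.factorial B : ℝ) ≠ 0 := by positivity
  have h5 : (Nat.factorial m : ℝ) ≠ 0 := by positivity
  have h6 : ((A+m+1).factorial : ℝ) ≠ 0 := by positivity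
  have h7 : ((B+m).factorial : ℝ) ≠ 0 := by positivity
  field_simp
  push_cast
  ring

lemma idI3 (A B m : ℕ) :
    ((A:ℝ)+m+1) * ((B:ℝ)+m+1) * Lam (A+B+m+1) (A+1) (B+1)
      = ((A:ℝ)+B+m+2) * (m:ℝ) * Lam (A+B+m+2) (A+1) (B+1) := by
  cases m with
  | zero =>
      rw [Lam_zero (A+B+0+1) (A+1) (B+1) (by omega)]
      push_cast; ring
  | succ m' =>
      have e1 : Lam (A+B+(m'+1)+1) (A+1) (B+1) = Lam ((A+1)+(B+1)+m') (A+1) (B+1) := by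
        congr 1; omega
      have e2 : Lam (A+B+(m'+1)+2) (A+1) (B+1) = Lam ((A+1)+(B+1)+(m'+1)) (A+1) (B+1) := by
        congr 1; omega
      rw [e1, e2, lam_fact, lam_fact]
      simp only [show (A+1)+(B+1) = A+B+2 from by omega,
        show (A+1)+(B+1)+m' = A+B+m'+2 from by omega,
        show (A+1)+(B+1)+(m'+1) = A+B+m'+3 from by omega,
        show (B+1)+m' = B+m'+1 from by omega, show (A+1)+m' = A+m'+1 from by omega,
        show (B+1)+(m'+1) = B+m'+2 from by omega, show (A+1)+(m'+1) = A+m'+2 from by omega,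
        show A+B+2+m' = A+B+m'+2 from by omega, show A+B+2+(m'+1) = A+B+m'+3 from by omega,
        show B+m'+1+1 = B+m'+2 from by omega, show A+m'+1+1 = A+m'+2 from by omega]
      rw [fact_step' (B+m'+2) (B+m'+1) (by omega), fact_step' (A+m'+2) (A+m'+1) (by omega),
          fact_step' (m'+1) m' (by omega), fact_step' (A+B+m'+3) (A+B+m'+2) (by omega)]
      have h1 : ((A+B+m'+2).factorial : ℝ) ≠ 0 := by positivity
      have h2 : ((A+B+2).factorial : ℝ) ≠ 0 := by positivity
      have h3 : ((A+1).factorial : ℝ) ≠ 0 := by positivity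
      have h4 : ((B+1).factorial : ℝ) ≠ 0 := by positivity
      have h5 : (m'.factorial : ℝ) ≠ 0 := by positivity
      have h6 : ((A+m'+1).factorial : ℝ) ≠ 0 := by positivity
      have h7 : ((B+m'+1).factorial : ℝ) ≠ 0 := by positivity
      field_simp
      push_cast
      ring

private lemma amgm (u w m : ℝ) (hu : 0 ≤ u) (hw : 0 ≤ w) (hm : 0 ≤ m)
    (h : u * w = m^2) : 2*m ≤ u + w := by
  nlinarith [sq_nonneg (u - w), sq_nonneg (u + w - 2*m)]

lemma core_ineq (l l00 l10 l01 X Y Z E x0 x1 y0 y1 : ℝ)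
    (hx0 : 0 ≤ x0) (hx1 : 0 ≤ x1) (hy0 : 0 ≤ y0) (hy1 : 0 ≤ y1)
    (hl : 0 ≤ l) (hl10 : 0 ≤ l10) (hl01 : 0 ≤ l01)
    (hX : 0 ≤ X) (hY : 0 ≤ Y) (hZ : 0 ≤ Z) (hE : 0 ≤ E)
    (h1 : l00 + Z = l) (h2 : l10 + X = l) (h3 : l01 + Y = l)
    (h4 : l10 * l01 = X*Y + l*Z + 2*E) (h5 : E^2 = X*Y*(l*Z)) :
    l00*(x0*y0) + l10*(x1*y0) + l01*(x0*y1)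
      + 2*(Real.sqrt (l10*(x1*y0)) * Real.sqrt (l01*(x0*y1)))
      ≤ l*((x0+x1)*(y0+y1)) := by
  set g : ℝ := Real.sqrt (l10*(x1*y0)) * Real.sqrt (l01*(x0*y1)) with hg
  have hgnn : 0 ≤ g := mul_nonneg (Real.sqrt_nonneg _) (Real.sqrt_nonneg _)
  have hg2 : g^2 = l10 * l01 * (x0*x1*y0*y1) := by
    rw [hg, mul_pow, Real.sq_sqrt (by positivity), Real.sq_sqrt (by positivity)]
    ring
  set p : ℝ := X*(x1*y0) with hp
  set q : ℝ := Y*(x0*y1) with hq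
  set r : ℝ := Z*(x0*y0) with hr
  set s : ℝ := l*(x1*y1) with hs
  set P : ℝ := x0*x1*y0*y1 with hP
  have hPnn : 0 ≤ P := by positivity
  have hEP : 0 ≤ E*P := mul_nonneg hE hPnn
  have hpn : 0 ≤ p := by positivity
  have hqn : 0 ≤ q := by positivity
  have hrn : 0 ≤ r := by positivity
  have hsn : 0 ≤ s := by positivity
  have c1 : 2*(E*P) ≤ p*s + q*r := by
    refine amgm _ _ _ (by positivity) (by positivity) hEP ?_
    have : (p*s) * (q*r) = (X*Y*(l*Z)) * P^2 := by rw [hp, hq, hr, hs, hP]; ring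
    rw [this, ← h5]; ring
  have c2 : 2*(E*P) ≤ p*r + q*s := by
    refine amgm _ _ _ (by positivity) (by positivity) hEP ?_
    have : (p*r) * (q*s) = (X*Y*(l*Z)) * P^2 := by rw [hp, hq, hr, hs, hP]; ring
    rw [this, ← h5]; ring
  have hR : 0 ≤ r + p + q + s := by positivity
  have key : 2*g ≤ r + p + q + s := by
    have h4g : (2*g)^2 = 4*(p*q) + 4*(r*s) + 8*(E*P) := by
      rw [mul_pow, hg2, h4, hp, hq, hr, hs, hP]; ring
    have hsq : (2*g)^2 ≤ (r + p + q + s)^2 := by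
      rw [h4g]
      nlinarith [sq_nonneg (p - q), sq_nonneg (r - s), c1, c2]
    calc 2*g = Real.sqrt ((2*g)^2) := (Real.sqrt_sq (by linarith)).symm
    _ ≤ Real.sqrt ((r+p+q+s)^2) := Real.sqrt_le_sqrt hsq
    _ = r+p+q+s := Real.sqrt_sq hR
  have expand : l*((x0+x1)*(y0+y1))
      = (l00 + Z)*(x0*y0) + (l10 + X)*(x1*y0) + (l01 + Y)*(x0*y1) + l*(x1*y1) := by
    rw [h1, h2, h3]; ring
  have e2 : (l00 + Z)*(x0*y0) + (l10 + X)*(x1*y0) + (l01 + Y)*(x0*y1) + l*(x1*y1)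
      = l00*(x0*y0) + l10*(x1*y0) + l01*(x0*y1) + (r + p + q + s) := by
    rw [hp, hq, hr, hs]; ring
  rw [expand, e2]
  linarith [key]

lemma lam_step (n' A B : ℕ) (x0 x1 y0 y1 : ℝ)
    (hx0 : 0 ≤ x0) (hx1 : 0 ≤ x1) (hy0 : 0 ≤ y0) (hy1 : 0 ≤ y1) :
    Lam n' (A+1) (B+1) * (x0*y0) + Lam n' A (B+1) * (x1*y0) + Lam n' (A+1) B * (x0*y1)
      + 2*(Real.sqrt (Lam n' A (B+1) * (x1*y0)) * Real.sqrt (Lam n' (A+1) B * (x0*y1)))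
      ≤ Lam (n'+1) (A+1) (B+1) * ((x0+x1)*(y0+y1)) := by
  by_cases h : A+B+1 ≤ n'
  · obtain ⟨m, rfl⟩ : ∃ m, n' = A+B+m+1 := ⟨n' - (A+B+1), by omega⟩
    rw [show A+B+m+1+1 = A+B+m+2 from by omega]
    set l : ℝ := Lam (A+B+m+2) (A+1) (B+1) with hldef
    have hl : 0 ≤ l := Lam_nonneg _ _ _
    have hl10 : 0 ≤ Lam (A+B+m+1) A (B+1) := Lam_nonneg _ _ _
    have hl01 : 0 ≤ Lam (A+B+m+1) (A+1) B := Lam_nonneg _ _ _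
    have c1pos : (0:ℝ) < ((A:ℝ)+B+2)*((A:ℝ)+m+1) := by positivity
    have c2pos : (0:ℝ) < ((A:ℝ)+B+2)*((B:ℝ)+m+1) := by positivity
    have cZpos : (0:ℝ) < ((A:ℝ)+m+1)*((B:ℝ)+m+1) := by positivity
    have f10 : Lam (A+B+m+1) A (B+1)
        = ((A:ℝ)+1)*(((A:ℝ)+B+m+2)*l) / (((A:ℝ)+B+2)*((A:ℝ)+m+1)) := by
      rw [eq_div_iff (ne_of_gt c1pos)]
      linear_combination idI1 A B m
    have f01 : Lam (A+B+m+1) (A+1) B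
        = ((B:ℝ)+1)*(((A:ℝ)+B+m+2)*l) / (((A:ℝ)+B+2)*((B:ℝ)+m+1)) := by
      rw [eq_div_iff (ne_of_gt c2pos)]
      linear_combination idI2 A B m
    have f00 : Lam (A+B+m+1) (A+1) (B+1)
        = ((A:ℝ)+B+m+2)*((m:ℝ)*l) / (((A:ℝ)+m+1)*((B:ℝ)+m+1)) := by
      rw [eq_div_iff (ne_of_gt cZpos)]
      linear_combination idI3 A B m
    refine core_ineq l (Lam (A+B+m+1) (A+1) (B+1)) (Lam (A+B+m+1) A (B+1)) (Lam (A+B+m+1) (A+1) B)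
      (l*(((B:ℝ)+1)*m)/(((A:ℝ)+B+2)*((A:ℝ)+m+1)))
      (l*(((A:ℝ)+1)*m)/(((A:ℝ)+B+2)*((B:ℝ)+m+1)))
      (l*(((A:ℝ)+1)*((B:ℝ)+1))/(((A:ℝ)+m+1)*((B:ℝ)+m+1)))
      (l^2*(((A:ℝ)+1)*(((B:ℝ)+1)*m))/(((A:ℝ)+B+2)*(((A:ℝ)+m+1)*((B:ℝ)+m+1))))
      x0 x1 y0 y1 hx0 hx1 hy0 hy1 hl hl10 hl01 ?_ ?_ ?_ ?_ ?_ ?_ ?_ ?_ ?_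
    · exact div_nonneg (mul_nonneg hl (by positivity)) (by positivity)
    · exact div_nonneg (mul_nonneg hl (by positivity)) (by positivity)
    · exact div_nonneg (mul_nonneg hl (by positivity)) (by positivity)
    · exact div_nonneg (mul_nonneg (by positivity) (by positivity)) (by positivity)
    · rw [f00]; field_simp; ring
    · rw [f10]; field_simp; ring
    · rw [f01]; field_simp; ring
    · rw [f10, f01]; field_simp; ring
    · field_simp
  · have z1 : Lam n' (A+1) (B+1) = 0 := Lam_zero _ _ _ (by omega)
    have z2 : Lam n' A (B+1) = 0 := Lam_zero _ _ _ (by omega)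
    have z3 : Lam n' (A+1) B = 0 := Lam_zero _ _ _ (by omega)
    rw [z1, z2, z3]
    simp only [zero_mul, Real.sqrt_zero, mul_zero, add_zero, zero_add]
    have := Lam_nonneg (n'+1) (A+1) (B+1)
    positivity


variable {ι : Type*} [DecidableEq ι]

noncomputable def dconv (k1 : ℕ) (a b : Finset ι → ℂ) (J : Finset ι) : ℂ :=
  ∑ J1 ∈ J.powersetCard k1, a J1 * b (J \ J1)

noncomputable def sqsum (U : Finset ι) (k : ℕ) (a : Finset ι → ℂ) : ℝ :=
  ∑ J ∈ U.powersetCard k, ‖a J‖ ^ 2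

lemma sqsum_nonneg (U : Finset ι) (k : ℕ) (a : Finset ι → ℂ) : 0 ≤ sqsum U k a := by
  unfold sqsum; positivity

lemma sqsum_insert (u : ι) (s : Finset ι) (hu : u ∉ s) (k : ℕ) (f : Finset ι → ℂ) :
    sqsum (insert u s) (k+1) f = sqsum s (k+1) f + sqsum s k (fun T => f (insert u T)) := by
  unfold sqsum
  rw [Finset.powersetCard_succ_insert hu, Finset.sum_union, Finset.sum_image]
  · intro T hT T' hT' h
    have hT1 : u ∉ T := fun hmem => hu ((Finset.mem_powersetCard.1 hT).1 hmem)
    have hT2 : u ∉ T' := fun hmem => hu ((Finset.mem_powersetCard.1 hT').1 hmem)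
    rw [← Finset.erase_insert hT1, ← Finset.erase_insert hT2, h]
  · rw [Finset.disjoint_left]
    intro T hT hT2
    obtain ⟨T', hT', rfl⟩ := Finset.mem_image.1 hT2
    exact hu ((Finset.mem_powersetCard.1 hT).1 (Finset.mem_insert_self u T'))

lemma dconv_insert (u : ι) (S : Finset ι) (hu : u ∉ S) (A : ℕ) (a b : Finset ι → ℂ) :
    dconv (A+1) a b (insert u S)
      = dconv (A+1) a (fun T => b (insert u T)) S
        + dconv A (fun T => a (insert u T)) b S := by
  unfold dconv
  rw [Finset.powersetCard_succ_insert hu, Finset.sum_union, Finset.sum_image]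
  · congr 1
    · refine Finset.sum_congr rfl fun J1 hJ1 => ?_
      have h1 : u ∉ J1 := fun hmem => hu ((Finset.mem_powersetCard.1 hJ1).1 hmem)
      rw [Finset.insert_sdiff_of_notMem _ h1]
    · refine Finset.sum_congr rfl fun T hT => ?_
      have hTS : T ⊆ S := (Finset.mem_powersetCard.1 hT).1
      have : insert u S \ insert u T = S \ T := by
        rw [Finset.insert_sdiff_insert]
        ext x
        simp only [Finset.mem_sdiff, Finset.mem_insert, not_or]
        constructor
        · rintro ⟨hxS, _, hxT⟩; exact ⟨hxS, hxT⟩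
        · rintro ⟨hxS, hxT⟩
          exact ⟨hxS, fun e => hu (e ▸ hxS), hxT⟩
      rw [this]
  · intro T hT T' hT' h
    have hT1 : u ∉ T := fun hmem => hu ((Finset.mem_powersetCard.1 hT).1 hmem)
    have hT2 : u ∉ T' := fun hmem => hu ((Finset.mem_powersetCard.1 hT').1 hmem)
    rw [← Finset.erase_insert hT1, ← Finset.erase_insert hT2, h]
  · rw [Finset.disjoint_left]
    intro T hT hT2
    obtain ⟨T', hT', rfl⟩ := Finset.mem_image.1 hT2
    exact hu ((Finset.mem_powersetCard.1 hT).1 (Finset.mem_insert_self u T'))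

/-- triangle + Cauchy-Schwarz bound for sums of squared norms -/
lemma sum_add_sq_bound (T : Finset (Finset ι)) (f g : Finset ι → ℂ) :
    ∑ S ∈ T, ‖f S + g S‖ ^ 2
      ≤ (∑ S ∈ T, ‖f S‖ ^ 2) + (∑ S ∈ T, ‖g S‖ ^ 2)
        + 2 * (Real.sqrt (∑ S ∈ T, ‖f S‖ ^ 2)
             * Real.sqrt (∑ S ∈ T, ‖g S‖ ^ 2)) := by
  have step1 : ∑ S ∈ T, ‖f S + g S‖ ^ 2
      ≤ ∑ S ∈ T, (‖f S‖ + ‖g S‖) ^ 2 := by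
    refine Finset.sum_le_sum fun S _ => ?_
    have := norm_add_le (f S) (g S)
    have h0 : 0 ≤ ‖f S + g S‖ := norm_nonneg _
    nlinarith
  have step2 : ∑ S ∈ T, (‖f S‖ + ‖g S‖) ^ 2
      = (∑ S ∈ T, ‖f S‖ ^ 2) + (∑ S ∈ T, ‖g S‖ ^ 2)
        + 2 * ∑ S ∈ T, ‖f S‖ * ‖g S‖ := by
    rw [← Finset.sum_add_distrib, Finset.mul_sum, ← Finset.sum_add_distrib]
    refine Finset.sum_congr rfl fun S _ => ?_
    ring
  have cs : ∑ S ∈ T, ‖f S‖ * ‖g S‖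
      ≤ Real.sqrt (∑ S ∈ T, ‖f S‖ ^ 2)
        * Real.sqrt (∑ S ∈ T, ‖g S‖ ^ 2) := by
    have h := Finset.sum_mul_sq_le_sq_mul_sq T (fun S => ‖f S‖)
      (fun S => ‖g S‖)
    have hnn : 0 ≤ ∑ S ∈ T, ‖f S‖ * ‖g S‖ :=
      Finset.sum_nonneg fun S _ => mul_nonneg (norm_nonneg _) (norm_nonneg _)
    calc ∑ S ∈ T, ‖f S‖ * ‖g S‖
        = Real.sqrt ((∑ S ∈ T, ‖f S‖ * ‖g S‖)^2) :=
          (Real.sqrt_sq hnn).symm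
      _ ≤ Real.sqrt ((∑ S ∈ T, ‖f S‖ ^ 2) * (∑ S ∈ T, ‖g S‖ ^ 2)) :=
          Real.sqrt_le_sqrt h
      _ = _ := Real.sqrt_mul (by positivity) _
  linarith [step1, step2 ▸ step1]

lemma lemA_left_zero (U : Finset ι) (k2 : ℕ) (a b : Finset ι → ℂ) :
    sqsum U (0+k2) (dconv 0 a b) ≤ Lam U.card 0 k2 * (sqsum U 0 a * sqsum U k2 b) := by
  rw [zero_add]
  have hconv : sqsum U k2 (dconv 0 a b) = ‖a ∅‖ ^ 2 * sqsum U k2 b := by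
    unfold sqsum dconv
    rw [Finset.mul_sum]
    refine Finset.sum_congr rfl fun J _ => ?_
    rw [Finset.powersetCard_zero, Finset.sum_singleton, Finset.sdiff_empty, norm_mul, mul_pow]
  have ha : sqsum U 0 a = ‖a ∅‖ ^ 2 := by
    unfold sqsum; rw [Finset.powersetCard_zero, Finset.sum_singleton]
  by_cases h : k2 ≤ U.card
  · have hLam : Lam U.card 0 k2 = 1 := by
      unfold Lam
      rw [zero_add, Nat.choose_zero_right, Nat.choose_zero_right]
      have : (U.card.choose k2 : ℝ) ≠ 0 := by
        exact_mod_cast (Nat.choose_pos h).ne'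
      field_simp
      norm_num
    rw [hLam, hconv, ha, one_mul]
  · have hz : U.powersetCard k2 = ∅ := Finset.powersetCard_eq_empty.2 (by omega)
    have h1 : sqsum U k2 (dconv 0 a b) = 0 := by unfold sqsum; rw [hz, Finset.sum_empty]
    have h2 : sqsum U k2 b = 0 := by unfold sqsum; rw [hz, Finset.sum_empty]
    rw [h1, h2, mul_zero, mul_zero]

lemma lemA_right_zero (U : Finset ι) (k1 : ℕ) (a b : Finset ι → ℂ) :
    sqsum U (k1+0) (dconv k1 a b) ≤ Lam U.card k1 0 * (sqsum U k1 a * sqsum U 0 b) := by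
  rw [add_zero]
  have hconv : sqsum U k1 (dconv k1 a b) = sqsum U k1 a * ‖b ∅‖ ^ 2 := by
    unfold sqsum dconv
    rw [Finset.sum_mul]
    refine Finset.sum_congr rfl fun J hJ => ?_
    have hcard : J.card = k1 := (Finset.mem_powersetCard.1 hJ).2
    rw [← hcard, Finset.powersetCard_self, Finset.sum_singleton, Finset.sdiff_self,
      norm_mul, mul_pow]
  have hb : sqsum U 0 b = ‖b ∅‖ ^ 2 := by
    unfold sqsum; rw [Finset.powersetCard_zero, Finset.sum_singleton]
  by_cases h : k1 ≤ U.card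
  · have hLam : Lam U.card k1 0 = 1 := by
      unfold Lam
      rw [add_zero, Nat.choose_self, Nat.choose_zero_right]
      have : (U.card.choose k1 : ℝ) ≠ 0 := by
        exact_mod_cast (Nat.choose_pos h).ne'
      field_simp
      norm_num
    rw [hLam, hconv, hb, one_mul]
  · have hz : U.powersetCard k1 = ∅ := Finset.powersetCard_eq_empty.2 (by omega)
    have h1 : sqsum U k1 (dconv k1 a b) = 0 := by unfold sqsum; rw [hz, Finset.sum_empty]
    have h2 : sqsum U k1 a = 0 := by unfold sqsum; rw [hz, Finset.sum_empty]
    rw [h1, h2, hb, zero_mul, mul_zero]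

theorem lemA (U : Finset ι) : ∀ (k1 k2 : ℕ) (a b : Finset ι → ℂ),
    sqsum U (k1+k2) (dconv k1 a b) ≤ Lam U.card k1 k2 * (sqsum U k1 a * sqsum U k2 b) := by
  induction U using Finset.induction_on with
  | empty =>
      intro k1 k2 a b
      cases k1 with
      | zero => exact lemA_left_zero _ _ _ _
      | succ A =>
          have hz : (∅ : Finset ι).powersetCard (A+1+k2) = ∅ :=
            Finset.powersetCard_eq_empty.2 (by simp)
          have hz1 : (∅ : Finset ι).powersetCard (A+1) = ∅ :=
            Finset.powersetCard_eq_empty.2 (by simp)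
          have h1 : sqsum (∅ : Finset ι) (A+1+k2) (dconv (A+1) a b) = 0 := by
            unfold sqsum; rw [hz, Finset.sum_empty]
          have h2 : sqsum (∅ : Finset ι) (A+1) a = 0 := by
            unfold sqsum; rw [hz1, Finset.sum_empty]
          rw [h1, h2, zero_mul, mul_zero]
  | @insert u s hu IH =>
      intro k1 k2 a b
      cases k1 with
      | zero => exact lemA_left_zero _ _ _ _
      | succ A =>
        cases k2 with
        | zero => exact lemA_right_zero _ _ _ _
        | succ B =>
          rw [Finset.card_insert_of_notMem hu,
              show A+1+(B+1) = (A+B+1)+1 from by omega,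
              sqsum_insert u s hu (A+B+1) _, sqsum_insert u s hu A a, sqsum_insert u s hu B b]
          set x0 : ℝ := sqsum s (A+1) a with hx0d
          set x1 : ℝ := sqsum s A (fun T => a (insert u T)) with hx1d
          set y0 : ℝ := sqsum s (B+1) b with hy0d
          set y1 : ℝ := sqsum s B (fun T => b (insert u T)) with hy1d
          have hx0 : 0 ≤ x0 := sqsum_nonneg _ _ _
          have hx1 : 0 ≤ x1 := sqsum_nonneg _ _ _
          have hy0 : 0 ≤ y0 := sqsum_nonneg _ _ _
          have hy1 : 0 ≤ y1 := sqsum_nonneg _ _ _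
          -- first piece
          have T1 : sqsum s (A+B+1+1) (dconv (A+1) a b)
              ≤ Lam s.card (A+1) (B+1) * (x0 * y0) := by
            rw [show A+B+1+1 = A+1+(B+1) from by omega]
            exact IH (A+1) (B+1) a b
          -- second piece
          have split : sqsum s (A+B+1) (fun T => dconv (A+1) a b (insert u T))
              = ∑ S ∈ s.powersetCard (A+B+1),
                  ‖(dconv (A+1) a (fun T => b (insert u T)) S)
                    + (dconv A (fun T => a (insert u T)) b S)‖ ^ 2 := by
            unfold sqsum
            refine Finset.sum_congr rfl fun S hS => ?_
            have huS : u ∉ S := fun hmem => hu ((Finset.mem_powersetCard.1 hS).1 hmem)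
            show ‖dconv (A+1) a b (insert u S)‖ ^ 2 = _
            rw [dconv_insert u S huS A a b]
          have hA2 : ∑ S ∈ s.powersetCard (A+B+1),
                ‖dconv (A+1) a (fun T => b (insert u T)) S‖ ^ 2
              ≤ Lam s.card (A+1) B * (x0 * y1) := by
            have := IH (A+1) B a (fun T => b (insert u T))
            rw [show A+1+B = A+B+1 from by omega] at this
            exact this
          have hA1 : ∑ S ∈ s.powersetCard (A+B+1),
                ‖dconv A (fun T => a (insert u T)) b S‖ ^ 2
              ≤ Lam s.card A (B+1) * (x1 * y0) := by
            have := IH A (B+1) (fun T => a (insert u T)) b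
            rw [show A+(B+1) = A+B+1 from by omega] at this
            exact this
          have habs2 : (0:ℝ) ≤ ∑ S ∈ s.powersetCard (A+B+1),
              ‖dconv (A+1) a (fun T => b (insert u T)) S‖ ^ 2 := by positivity
          have habs1 : (0:ℝ) ≤ ∑ S ∈ s.powersetCard (A+B+1),
              ‖dconv A (fun T => a (insert u T)) b S‖ ^ 2 := by positivity
          have T2 : sqsum s (A+B+1) (fun T => dconv (A+1) a b (insert u T))
              ≤ Lam s.card (A+1) B * (x0 * y1) + Lam s.card A (B+1) * (x1 * y0)
                + 2 * (Real.sqrt (Lam s.card (A+1) B * (x0 * y1))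
                     * Real.sqrt (Lam s.card A (B+1) * (x1 * y0))) := by
            rw [split]
            refine le_trans (sum_add_sq_bound _ _ _) ?_
            have m1 : Real.sqrt (∑ S ∈ s.powersetCard (A+B+1),
                  ‖dconv (A+1) a (fun T => b (insert u T)) S‖ ^ 2)
                ≤ Real.sqrt (Lam s.card (A+1) B * (x0 * y1)) := Real.sqrt_le_sqrt hA2
            have m2 : Real.sqrt (∑ S ∈ s.powersetCard (A+B+1),
                  ‖dconv A (fun T => a (insert u T)) b S‖ ^ 2)
                ≤ Real.sqrt (Lam s.card A (B+1) * (x1 * y0)) := Real.sqrt_le_sqrt hA1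
            have hm : Real.sqrt (∑ S ∈ s.powersetCard (A+B+1),
                  ‖dconv (A+1) a (fun T => b (insert u T)) S‖ ^ 2)
                * Real.sqrt (∑ S ∈ s.powersetCard (A+B+1),
                  ‖dconv A (fun T => a (insert u T)) b S‖ ^ 2)
                ≤ Real.sqrt (Lam s.card (A+1) B * (x0 * y1))
                  * Real.sqrt (Lam s.card A (B+1) * (x1 * y0)) :=
              mul_le_mul m1 m2 (Real.sqrt_nonneg _) (Real.sqrt_nonneg _)
            linarith [hA1, hA2, hm]
          refine le_trans (add_le_add T1 T2) ?_
          have final := lam_step s.card A B x0 x1 y0 y1 hx0 hx1 hy0 hy1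
          calc Lam s.card (A+1) (B+1) * (x0 * y0)
              + (Lam s.card (A+1) B * (x0 * y1) + Lam s.card A (B+1) * (x1 * y0)
                + 2 * (Real.sqrt (Lam s.card (A+1) B * (x0 * y1))
                     * Real.sqrt (Lam s.card A (B+1) * (x1 * y0))))
              = Lam s.card (A+1) (B+1) * (x0*y0) + Lam s.card A (B+1) * (x1*y0)
                + Lam s.card (A+1) B * (x0*y1)
                + 2*(Real.sqrt (Lam s.card A (B+1) * (x1*y0))
                   * Real.sqrt (Lam s.card (A+1) B * (x0*y1))) := by ring
            _ ≤ Lam (s.card+1) (A+1) (B+1) * ((x0+x1)*(y0+y1)) := final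



section glue

variable {n : ℕ} {J J1 K1 K2 : Finset (Fin n)}

/-- glue two partial bijections into one -/
def glueF (hsub : J1 ⊆ J) (p1 : {x // x ∈ J1} → {x // x ∈ K1})
    (p2 : {x // x ∈ J \ J1} → {x // x ∈ K2}) : {x // x ∈ J} → {x // x ∈ K1 ∪ K2} :=
  fun x =>
    if h : (x : Fin n) ∈ J1 then
      ⟨(p1 ⟨x.1, h⟩ : Fin n), Finset.mem_union_left _ (p1 ⟨x.1, h⟩).2⟩
    else
      ⟨(p2 ⟨x.1, Finset.mem_sdiff.2 ⟨x.2, h⟩⟩ : Fin n),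
        Finset.mem_union_right _ (p2 ⟨x.1, Finset.mem_sdiff.2 ⟨x.2, h⟩⟩).2⟩

lemma glueF_val_pos (hsub : J1 ⊆ J) (p1 : {x // x ∈ J1} → {x // x ∈ K1})
    (p2 : {x // x ∈ J \ J1} → {x // x ∈ K2}) (x : {x // x ∈ J}) (h : (x : Fin n) ∈ J1) :
    (glueF hsub p1 p2 x : Fin n) = (p1 ⟨x.1, h⟩ : Fin n) :=
  congrArg Subtype.val (dif_pos h)

lemma glueF_val_neg (hsub : J1 ⊆ J) (p1 : {x // x ∈ J1} → {x // x ∈ K1})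
    (p2 : {x // x ∈ J \ J1} → {x // x ∈ K2}) (x : {x // x ∈ J}) (h : (x : Fin n) ∉ J1) :
    (glueF hsub p1 p2 x : Fin n) = (p2 ⟨x.1, Finset.mem_sdiff.2 ⟨x.2, h⟩⟩ : Fin n) :=
  congrArg Subtype.val (dif_neg h)

end glue

set_option maxHeartbeats 1000000 in
theorem perSub_laplace {n : ℕ} (Z : Matrix (Fin n) (Fin n) ℂ) (K1 K2 : Finset (Fin n))
    (hK : Disjoint K1 K2) (J : Finset (Fin n)) (hJ : J.card = K1.card + K2.card) :
    perSub Z J (K1 ∪ K2) =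
      ∑ J1 ∈ J.powersetCard K1.card, perSub Z J1 K1 * perSub Z (J \ J1) K2 := by
  classical
  have hcardK : (K1 ∪ K2).card = K1.card + K2.card := Finset.card_union_of_disjoint hK
  set φ : ({x // x ∈ J} → {x // x ∈ K1 ∪ K2}) → Finset (Fin n) :=
    fun f => J.filter (fun x => ∃ h : x ∈ J, ((f ⟨x, h⟩ : Fin n) ∈ K1)) with hφdef
  have hφmem : ∀ f : {x // x ∈ J} → {x // x ∈ K1 ∪ K2}, ∀ x : Fin n,
      x ∈ φ f ↔ ∃ h : x ∈ J, ((f ⟨x, h⟩ : Fin n) ∈ K1) := by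
    intro f x
    rw [hφdef, Finset.mem_filter]
    constructor
    · rintro ⟨-, h⟩; exact h
    · rintro ⟨h, hfx⟩; exact ⟨h, h, hfx⟩
  have hφsub : ∀ f, φ f ⊆ J := fun f => Finset.filter_subset _ _
  have hmaps : ∀ f ∈ Finset.univ.filter
      (fun f : {x // x ∈ J} → {x // x ∈ K1 ∪ K2} => Function.Bijective f),
      φ f ∈ J.powersetCard K1.card := by
    intro f hf
    have hbij : Function.Bijective f := (Finset.mem_filter.1 hf).2
    rw [Finset.mem_powersetCard]
    refine ⟨hφsub f, ?_⟩
    refine Finset.card_bij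
      (fun x hx => ((f ⟨x, (hφmem f x).1 hx |>.choose⟩ : Fin n))) ?_ ?_ ?_
    · intro x hx
      exact ((hφmem f x).1 hx).choose_spec
    · intro x hx y hy hxy
      have := hbij.1 (Subtype.ext hxy)
      exact congrArg Subtype.val this
    · intro y hy
      obtain ⟨j, hj⟩ := hbij.2 ⟨y, Finset.mem_union_left _ hy⟩
      have hjφ : (j : Fin n) ∈ φ f := by
        rw [hφmem]
        refine ⟨j.2, ?_⟩
        have : (⟨(j : Fin n), j.2⟩ : {x // x ∈ J}) = j := rfl
        rw [this, hj]
        exact hy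
      exact ⟨j, hjφ, congrArg Subtype.val hj⟩
  rw [perSub, ← Finset.sum_fiberwise_of_maps_to hmaps]
  refine Finset.sum_congr rfl fun J1 hJ1 => ?_
  obtain ⟨hJ1sub, hJ1card⟩ := Finset.mem_powersetCard.1 hJ1
  have hJd : J.card = J1.card + (J \ J1).card := by
    rw [Finset.card_sdiff_of_subset hJ1sub]; omega
  rw [perSub, perSub, Finset.sum_mul_sum, ← Finset.sum_product']
  refine Finset.sum_bij'
    (i := fun f hf =>
      (fun j => ⟨(f ⟨j.1, hJ1sub j.2⟩ : Fin n), by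
          have hfmem : φ f = J1 := (Finset.mem_filter.1 hf).2
          have : (j : Fin n) ∈ φ f := hfmem ▸ j.2
          obtain ⟨h, hk⟩ := (hφmem f j.1).1 this
          exact hk⟩,
       fun j => ⟨(f ⟨j.1, (Finset.mem_sdiff.1 j.2).1⟩ : Fin n), by
          have hfmem : φ f = J1 := (Finset.mem_filter.1 hf).2
          obtain ⟨hxJ, hxnJ1⟩ := Finset.mem_sdiff.1 j.2
          have hnot : (j : Fin n) ∉ φ f := fun hc => hxnJ1 (hfmem ▸ hc)
          have hmem : (f ⟨j.1, hxJ⟩ : Fin n) ∈ K1 ∪ K2 := (f ⟨j.1, hxJ⟩).2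
          rcases Finset.mem_union.1 hmem with h1 | h2
          · exact absurd ((hφmem f j.1).2 ⟨hxJ, h1⟩) hnot
          · exact h2⟩))
    (j := fun p hp => glueF hJ1sub p.1 p.2)
    ?_ ?_ ?_ ?_ ?_
  · -- i lands in the product of bijective filters
    intro f hf
    have hbij : Function.Bijective f := (Finset.mem_filter.1 (Finset.mem_filter.1 hf).1).2
    rw [Finset.mem_product]
    constructor
    · refine Finset.mem_filter.2 ⟨Finset.mem_univ _, ?_⟩
      rw [Fintype.bijective_iff_injective_and_card]
      constructor
      · rintro ⟨a, ha⟩ ⟨b, hb⟩ hab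
        simp only [] at hab
        have hv := congrArg Subtype.val hab
        have h2 := hbij.1 (Subtype.ext
          (a1 := f ⟨a, hJ1sub ha⟩) (a2 := f ⟨b, hJ1sub hb⟩) hv)
        exact Subtype.ext (show a = b from congrArg Subtype.val h2)
      · rw [Fintype.card_coe, Fintype.card_coe, hJ1card]
    · refine Finset.mem_filter.2 ⟨Finset.mem_univ _, ?_⟩
      rw [Fintype.bijective_iff_injective_and_card]
      constructor
      · rintro ⟨a, ha⟩ ⟨b, hb⟩ hab
        simp only [] at hab
        have hv := congrArg Subtype.val hab
        have h2 := hbij.1 (Subtype.ext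
          (a1 := f ⟨a, (Finset.mem_sdiff.1 ha).1⟩)
          (a2 := f ⟨b, (Finset.mem_sdiff.1 hb).1⟩) hv)
        exact Subtype.ext (show a = b from congrArg Subtype.val h2)
      · rw [Fintype.card_coe, Fintype.card_coe]
        omega
  · -- glueF lands in the fiber
    intro p hp
    rw [Finset.mem_product] at hp
    obtain ⟨hp1, hp2⟩ := hp
    have hb1 : Function.Bijective p.1 := (Finset.mem_filter.1 hp1).2
    have hb2 : Function.Bijective p.2 := (Finset.mem_filter.1 hp2).2
    refine Finset.mem_filter.2 ⟨Finset.mem_filter.2 ⟨Finset.mem_univ _, ?_⟩, ?_⟩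
    · rw [Fintype.bijective_iff_injective_and_card]
      constructor
      · intro x y hxy
        have hv := congrArg Subtype.val hxy
        by_cases hx : (x : Fin n) ∈ J1 <;> by_cases hy : (y : Fin n) ∈ J1
        · rw [glueF_val_pos hJ1sub p.1 p.2 x hx, glueF_val_pos hJ1sub p.1 p.2 y hy] at hv
          have h2 := hb1.1 (Subtype.ext (a1 := p.1 ⟨x.1, hx⟩) (a2 := p.1 ⟨y.1, hy⟩) hv)
          exact Subtype.ext (congrArg Subtype.val h2 :)
        · rw [glueF_val_pos hJ1sub p.1 p.2 x hx, glueF_val_neg hJ1sub p.1 p.2 y hy] at hv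
          exfalso
          have h1 : (p.1 ⟨x.1, hx⟩ : Fin n) ∈ K1 := (p.1 ⟨x.1, hx⟩).2
          have h2 : (p.1 ⟨x.1, hx⟩ : Fin n) ∈ K2 := by rw [hv]; exact (p.2 _).2
          exact Finset.disjoint_left.1 hK h1 h2
        · rw [glueF_val_neg hJ1sub p.1 p.2 x hx, glueF_val_pos hJ1sub p.1 p.2 y hy] at hv
          exfalso
          have h2 : (p.2 ⟨x.1, Finset.mem_sdiff.2 ⟨x.2, hx⟩⟩ : Fin n) ∈ K2 := (p.2 _).2
          have h1 : (p.2 ⟨x.1, Finset.mem_sdiff.2 ⟨x.2, hx⟩⟩ : Fin n) ∈ K1 := by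
            rw [hv]; exact (p.1 _).2
          exact Finset.disjoint_left.1 hK h1 h2
        · rw [glueF_val_neg hJ1sub p.1 p.2 x hx, glueF_val_neg hJ1sub p.1 p.2 y hy] at hv
          have h2 := hb2.1 (Subtype.ext (a1 := p.2 ⟨x.1, Finset.mem_sdiff.2 ⟨x.2, hx⟩⟩)
            (a2 := p.2 ⟨y.1, Finset.mem_sdiff.2 ⟨y.2, hy⟩⟩) hv)
          exact Subtype.ext (congrArg Subtype.val h2 :)
      · rw [Fintype.card_coe, Fintype.card_coe, hJ, hcardK]
    · -- fiber condition φ (glueF ...) = J1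
      apply Finset.ext
      intro x
      constructor
      · intro hxφ
        obtain ⟨h, hmem⟩ := (hφmem _ x).1 hxφ
        by_cases hx : x ∈ J1
        · exact hx
        · exfalso
          rw [glueF_val_neg hJ1sub p.1 p.2 ⟨x, h⟩ hx] at hmem
          exact Finset.disjoint_left.1 hK hmem (p.2 _).2
      · intro hx
        refine (hφmem _ x).2 ⟨hJ1sub hx, ?_⟩
        rw [glueF_val_pos hJ1sub p.1 p.2 ⟨x, hJ1sub hx⟩ hx]
        exact (p.1 _).2
  · -- left inverse
    intro f hf
    funext x
    apply Subtype.ext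
    by_cases hx : (x : Fin n) ∈ J1
    · rw [glueF_val_pos hJ1sub _ _ x hx]
    · rw [glueF_val_neg hJ1sub _ _ x hx]
  · -- right inverse
    intro p hp
    refine Prod.ext ?_ ?_
    · funext j
      apply Subtype.ext
      exact glueF_val_pos hJ1sub p.1 p.2 ⟨j.1, hJ1sub j.2⟩ j.2
    · funext j
      apply Subtype.ext
      exact glueF_val_neg hJ1sub p.1 p.2 ⟨j.1, (Finset.mem_sdiff.1 j.2).1⟩
        (Finset.mem_sdiff.1 j.2).2
  · -- values agree
    intro f hf
    classical
    have hGsplit : ∀ G : Fin n → ℂ,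
        ∏ v ∈ J, G v = (∏ v ∈ J1, G v) * ∏ v ∈ J \ J1, G v := by
      intro G
      rw [← Finset.prod_union Finset.disjoint_sdiff, Finset.union_sdiff_of_subset hJ1sub]
    set G : Fin n → ℂ := fun v => if h : v ∈ J then Z v ((f ⟨v, h⟩ : Fin n)) else 1 with hGdef
    calc ∏ j : {x // x ∈ J}, Z j.1 (f j).1
        = ∏ v ∈ J, G v := by
          rw [← Finset.prod_coe_sort J G]
          refine Finset.prod_congr rfl fun j _ => ?_
          simp only [hGdef]
          exact (dif_pos (t := fun h => Z j.1 ((f ⟨j.1, h⟩ : {x // x ∈ K1 ∪ K2}) : Fin n))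
            (e := fun _ => (1:ℂ)) j.2).symm
      _ = (∏ v ∈ J1, G v) * ∏ v ∈ J \ J1, G v := hGsplit G
      _ = _ := by
          rw [← Finset.prod_coe_sort J1 G, ← Finset.prod_coe_sort (J \ J1) G]
          refine congrArg₂ (· * ·) ?_ ?_
          · refine Finset.prod_congr rfl fun j _ => ?_
            simp only [hGdef]
            exact dif_pos (t := fun h => Z j.1 ((f ⟨j.1, h⟩ : {x // x ∈ K1 ∪ K2}) : Fin n))
              (e := fun _ => (1:ℂ)) (hJ1sub j.2)
          · refine Finset.prod_congr rfl fun j _ => ?_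
            simp only [hGdef]
            exact dif_pos (t := fun h => Z j.1 ((f ⟨j.1, h⟩ : {x // x ∈ K1 ∪ K2}) : Fin n))
              (e := fun _ => (1:ℂ)) ((Finset.mem_sdiff.1 j.2).1)


section assembly

variable {n : ℕ} (Z : Matrix (Fin n) (Fin n) ℂ)

lemma fZ_eq (K : Finset (Fin n)) :
    fZ Z K = (∑ J ∈ Finset.powersetCard K.card (Finset.univ : Finset (Fin n)),
        ‖perSub Z J K‖ ^ 2)
      / ((n.choose K.card : ℝ) * ((K.card.factorial : ℝ))^2) := by
  unfold fZ
  rw [show (∑ J ∈ Finset.powersetCard K.card (Finset.univ : Finset (Fin n)),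
      ‖perSub Z J K / (K.card.factorial : ℂ)‖ ^ 2)
      = (∑ J ∈ Finset.powersetCard K.card (Finset.univ : Finset (Fin n)),
        ‖perSub Z J K‖ ^ 2) / ((K.card.factorial : ℝ))^2 from ?_]
  · ring
  · rw [Finset.sum_div]
    refine Finset.sum_congr rfl fun J _ => ?_
    rw [norm_div, div_pow, Complex.norm_natCast]

lemma fZ_nonneg (K : Finset (Fin n)) : 0 ≤ fZ Z K := by
  unfold fZ; positivity

lemma fZ_submul (K1 K2 : Finset (Fin n)) (hK : Disjoint K1 K2) :
    fZ Z (K1 ∪ K2) ≤ fZ Z K1 * fZ Z K2 := by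
  classical
  have hcard : (K1 ∪ K2).card = K1.card + K2.card := Finset.card_union_of_disjoint hK
  set k1 := K1.card with hk1
  set k2 := K2.card with hk2
  have hk1n : k1 ≤ n := by
    simpa using (Finset.card_le_univ K1).trans_eq (by simp)
  have hk2n : k2 ≤ n := by
    simpa using (Finset.card_le_univ K2).trans_eq (by simp)
  have hkn : k1 + k2 ≤ n := by
    have := (Finset.card_le_univ (K1 ∪ K2)).trans_eq
      (by simp : (Finset.univ : Finset (Fin n)).card = n)
    omega
  -- Laplace rewriting of the main sum
  have hS : (∑ J ∈ Finset.powersetCard (K1 ∪ K2).card (Finset.univ : Finset (Fin n)),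
      ‖perSub Z J (K1 ∪ K2)‖ ^ 2)
      = sqsum (Finset.univ : Finset (Fin n)) (k1+k2)
          (dconv k1 (fun J1 => perSub Z J1 K1) (fun J2 => perSub Z J2 K2)) := by
    rw [hcard]
    unfold sqsum
    refine Finset.sum_congr rfl fun J hJ => ?_
    have hJcard : J.card = k1 + k2 := (Finset.mem_powersetCard.1 hJ).2
    rw [perSub_laplace Z K1 K2 hK J (by omega)]
    rfl
  have hlemA := lemA (Finset.univ : Finset (Fin n)) k1 k2
    (fun J1 => perSub Z J1 K1) (fun J2 => perSub Z J2 K2)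
  rw [show (Finset.univ : Finset (Fin n)).card = n from by simp] at hlemA
  set S1 : ℝ := sqsum (Finset.univ : Finset (Fin n)) k1 (fun J1 => perSub Z J1 K1) with hS1
  set S2 : ℝ := sqsum (Finset.univ : Finset (Fin n)) k2 (fun J2 => perSub Z J2 K2) with hS2
  have hS1e : fZ Z K1 = S1 / ((n.choose k1 : ℝ) * ((k1.factorial : ℝ))^2) := by
    rw [fZ_eq]; rfl
  have hS2e : fZ Z K2 = S2 / ((n.choose k2 : ℝ) * ((k2.factorial : ℝ))^2) := by
    rw [fZ_eq]; rfl
  have hC1 : (0:ℝ) < (n.choose k1 : ℝ) := by exact_mod_cast Nat.choose_pos hk1n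
  have hC2 : (0:ℝ) < (n.choose k2 : ℝ) := by exact_mod_cast Nat.choose_pos hk2n
  have hC : (0:ℝ) < (n.choose (k1+k2) : ℝ) := by exact_mod_cast Nat.choose_pos hkn
  have hf1 : (0:ℝ) < ((k1.factorial : ℝ)) := by exact_mod_cast k1.factorial_pos
  have hf2 : (0:ℝ) < ((k2.factorial : ℝ)) := by exact_mod_cast k2.factorial_pos
  have hf : (0:ℝ) < (((k1+k2).factorial : ℝ)) := by exact_mod_cast (k1+k2).factorial_pos
  -- key constant identity
  have hM : ((k1+k2).choose k1 : ℝ) * (k1.factorial : ℝ) * (k2.factorial : ℝ)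
      = ((k1+k2).factorial : ℝ) := by
    have := Nat.choose_mul_factorial_mul_factorial (Nat.le_add_right k1 k2)
    rw [Nat.add_sub_cancel_left] at this
    exact_mod_cast this
  have key : Lam n k1 k2 * (((n.choose k1 : ℝ) * ((k1.factorial : ℝ))^2)
        * ((n.choose k2 : ℝ) * ((k2.factorial : ℝ))^2))
      = (n.choose (k1+k2) : ℝ) * (((k1+k2).factorial : ℝ))^2 := by
    unfold Lam
    rw [← hM]
    field_simp
  have hSnn1 : 0 ≤ S1 := sqsum_nonneg _ _ _
  have hSnn2 : 0 ≤ S2 := sqsum_nonneg _ _ _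
  calc fZ Z (K1 ∪ K2)
      = (∑ J ∈ Finset.powersetCard (K1 ∪ K2).card (Finset.univ : Finset (Fin n)),
          ‖perSub Z J (K1 ∪ K2)‖ ^ 2)
        / ((n.choose (K1 ∪ K2).card : ℝ) * (((K1 ∪ K2).card.factorial : ℝ))^2) := fZ_eq Z _
    _ = (sqsum (Finset.univ : Finset (Fin n)) (k1+k2)
          (dconv k1 (fun J1 => perSub Z J1 K1) (fun J2 => perSub Z J2 K2)))
        / ((n.choose (k1+k2) : ℝ) * (((k1+k2).factorial : ℝ))^2) := by rw [hS, hcard]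
    _ ≤ (Lam n k1 k2 * (S1 * S2))
        / ((n.choose (k1+k2) : ℝ) * (((k1+k2).factorial : ℝ))^2) := by
        gcongr
    _ = (S1 * S2) / (((n.choose k1 : ℝ) * ((k1.factorial : ℝ))^2)
          * ((n.choose k2 : ℝ) * ((k2.factorial : ℝ))^2)) := by
        rw [div_eq_div_iff (by positivity) (by positivity)]
        linear_combination (S1 * S2) * key
    _ = fZ Z K1 * fZ Z K2 := by
        rw [hS1e, hS2e]
        rw [div_mul_div_comm]
  

lemma fZ_empty : fZ Z (∅ : Finset (Fin n)) = 1 := by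
  classical
  haveI : IsEmpty {x // x ∈ (∅ : Finset (Fin n))} :=
    ⟨fun a => (Finset.notMem_empty _ a.2)⟩
  have hper : perSub Z (∅ : Finset (Fin n)) (∅ : Finset (Fin n)) = 1 := by
    unfold perSub
    rw [Finset.filter_true_of_mem
      (fun f _ => ⟨fun a => isEmptyElim a, fun b => isEmptyElim b⟩)]
    simp
  unfold fZ
  simp [hper]

theorem fZ_subadd_aux : ∀ (d : ℕ) (W : Fin d → Finset (Fin n)),
    (∀ r s, r ≠ s → Disjoint (W r) (W s)) →
    fZ Z (Finset.univ.biUnion W) ≤ ∏ r, fZ Z (W r) := by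
  intro d
  induction d with
  | zero =>
      intro W _
      rw [show (Finset.univ.biUnion W : Finset (Fin n)) = ∅ from by simp]
      rw [fZ_empty]
      rw [show (∏ r : Fin 0, fZ Z (W r)) = 1 from by simp]
  | succ d IH =>
      intro W hdisj
      have hsplit : Finset.univ.biUnion W
          = W 0 ∪ Finset.univ.biUnion (fun i : Fin d => W i.succ) := by
        ext x
        simp only [Finset.mem_biUnion, Finset.mem_univ, true_and, Finset.mem_union]
        constructor
        · rintro ⟨r, hr⟩
          rcases Fin.eq_zero_or_eq_succ r with rfl | ⟨i, rfl⟩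
          · exact Or.inl hr
          · exact Or.inr ⟨i, hr⟩
        · rintro (h | ⟨i, hi⟩)
          · exact ⟨0, h⟩
          · exact ⟨i.succ, hi⟩
      have hd0 : Disjoint (W 0) (Finset.univ.biUnion (fun i : Fin d => W i.succ)) := by
        rw [Finset.disjoint_biUnion_right]
        intro i _
        exact hdisj 0 i.succ (Fin.succ_ne_zero i).symm
      have hIH := IH (fun i => W i.succ)
        (fun r s hrs => hdisj r.succ s.succ (fun h => hrs (Fin.succ_injective _ h)))
      calc fZ Z (Finset.univ.biUnion W)
          = fZ Z (W 0 ∪ Finset.univ.biUnion (fun i : Fin d => W i.succ)) := by rw [hsplit]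
        _ ≤ fZ Z (W 0) * fZ Z (Finset.univ.biUnion (fun i : Fin d => W i.succ)) :=
            fZ_submul Z _ _ hd0
        _ ≤ fZ Z (W 0) * ∏ i : Fin d, fZ Z (W i.succ) :=
            mul_le_mul_of_nonneg_left hIH (fZ_nonneg Z _)
        _ = ∏ r : Fin (d+1), fZ Z (W r) := (Fin.prod_univ_succ (fun r => fZ Z (W r))).symm

end assembly

theorem fZ_log_subadditive {n : ℕ} (hn : 1 ≤ n) (Z : Matrix (Fin n) (Fin n) ℂ)
    (K : Finset (Fin n)) (d : ℕ) (hd : 1 ≤ d) (W : Fin d → Finset (Fin n))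
    (hdisj : ∀ r s, r ≠ s → Disjoint (W r) (W s))
    (hunion : Finset.univ.biUnion W = K) :
    fZ Z K ≤ ∏ r, fZ Z (W r) := by
  rw [← hunion]
  exact fZ_subadd_aux Z d W hdisj
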